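/- The logistic put value function p(x,τ) = √τ · ln(1 + exp(x/√τ)) satisfies the dual Dupire partial differential equation ∂p/∂τ = (1/2)·η²(x/√τ)·∂²p/∂x² for all x ∈ ℝ and τ > 0, where η²(z) = (1+e^z)·ln(1+e^{−z}) + (1+e^{−z})·ln(1+e^z). -/

import Mathlib

/-- The squared variance function of the logistic model. -/
noncomputable def eta2 (z : ℝ) : ℝ :=
  (1 + Real.exp z) * Real.log (1 + Real.exp (-z)) +
    (1 + Real.exp (-z)) * Real.log (1 + Real.exp z)

/-- The logistic put value p(x,τ) = √τ · ln(1 + exp(x/√τ)). -/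
noncomputable def logisticPut (x τ : ℝ) : ℝ :=
  Real.sqrt τ * Real.log (1 + Real.exp (x / Real.sqrt τ))

lemma logisticPut_hasDerivAt_x (s : ℝ) (hs : 0 < s) (y : ℝ) :
    HasDerivAt (fun y => s * Real.log (1 + Real.exp (y / s)))
      (Real.exp (y / s) / (1 + Real.exp (y / s))) y := by
  have h1 : HasDerivAt (fun y : ℝ => y / s) (1 / s) y := (hasDerivAt_id y).div_const s
  have h2 : HasDerivAt (fun y : ℝ => Real.exp (y / s)) (Real.exp (y / s) * (1 / s)) y := h1.exp
  have h3 : HasDerivAt (fun y : ℝ => 1 + Real.exp (y / s)) (Real.exp (y / s) * (1 / s)) y :=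
    h2.const_add 1
  have hpos : (0:ℝ) < 1 + Real.exp (y / s) := by positivity
  have h4 := (h3.log hpos.ne').const_mul s
  refine h4.congr_deriv ?_
  field_simp

lemma logisticPut_hasDerivAt_xx (s : ℝ) (hs : 0 < s) (y : ℝ) :
    HasDerivAt (fun y => Real.exp (y / s) / (1 + Real.exp (y / s)))
      (Real.exp (y / s) / (s * (1 + Real.exp (y / s)) ^ 2)) y := by
  have h1 : HasDerivAt (fun y : ℝ => y / s) (1 / s) y := (hasDerivAt_id y).div_const s
  have h2 : HasDerivAt (fun y : ℝ => Real.exp (y / s)) (Real.exp (y / s) * (1 / s)) y := h1.exp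
  have h3 : HasDerivAt (fun y : ℝ => 1 + Real.exp (y / s)) (Real.exp (y / s) * (1 / s)) y :=
    h2.const_add 1
  have hpos : (0:ℝ) < 1 + Real.exp (y / s) := by positivity
  have h4 := h2.div h3 hpos.ne'
  refine h4.congr_deriv ?_
  field_simp
  ring

lemma logisticPut_hasDerivAt_t (x τ : ℝ) (hτ : 0 < τ) :
    HasDerivAt (fun t => Real.sqrt t * Real.log (1 + Real.exp (x / Real.sqrt t)))
      (Real.log (1 + Real.exp (x / Real.sqrt τ)) / (2 * Real.sqrt τ) -
        x * Real.exp (x / Real.sqrt τ) / (2 * τ * (1 + Real.exp (x / Real.sqrt τ)))) τ := by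
  have hs : 0 < Real.sqrt τ := Real.sqrt_pos.2 hτ
  have hsq : HasDerivAt Real.sqrt (1 / (2 * Real.sqrt τ)) τ := Real.hasDerivAt_sqrt hτ.ne'
  have hdiv : HasDerivAt (fun t => x / Real.sqrt t)
      ((0 * Real.sqrt τ - x * (1 / (2 * Real.sqrt τ))) / (Real.sqrt τ) ^ 2) τ :=
    (hasDerivAt_const τ x).div hsq hs.ne'
  have hexp := hdiv.exp
  have hadd := hexp.const_add 1
  have hpos : (0:ℝ) < 1 + Real.exp (x / Real.sqrt τ) := by positivity
  have hlog := hadd.log hpos.ne'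
  have hmul := hsq.mul hlog
  refine hmul.congr_deriv ?_
  have hsqτ : (Real.sqrt τ) ^ 2 = τ := Real.sq_sqrt hτ.le
  rw [hsqτ]
  field_simp
  ring

theorem logisticPut_dualDupire (x τ : ℝ) (hτ : 0 < τ) :
    deriv (fun t => logisticPut x t) τ =
      (1 / 2) * eta2 (x / Real.sqrt τ) * deriv (deriv (fun y => logisticPut y τ)) x := by
  have hs : 0 < Real.sqrt τ := Real.sqrt_pos.2 hτ
  set s := Real.sqrt τ with hs_def
  have hsqτ : s ^ 2 = τ := Real.sq_sqrt hτ.le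
  have hd1 : deriv (fun y => logisticPut y τ) = fun y => Real.exp (y / s) / (1 + Real.exp (y / s)) := by
    funext y
    exact (logisticPut_hasDerivAt_x s hs y).deriv
  have hLHS : deriv (fun t => logisticPut x t) τ =
      Real.log (1 + Real.exp (x / s)) / (2 * s) -
        x * Real.exp (x / s) / (2 * τ * (1 + Real.exp (x / s))) := by
    exact (logisticPut_hasDerivAt_t x τ hτ).deriv
  rw [hLHS, hd1, (logisticPut_hasDerivAt_xx s hs x).deriv]
  set z := x / s with hz_def
  have hlogneg : Real.log (1 + Real.exp (-z)) = Real.log (1 + Real.exp z) - z := by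
    have h1 : (1:ℝ) + Real.exp (-z) = Real.exp (-z) * (1 + Real.exp z) := by
      rw [mul_add, mul_one, ← Real.exp_add]
      simp [add_comm]
    rw [h1, Real.log_mul (Real.exp_ne_zero _) (by positivity), Real.log_exp]
    ring
  have hpos : (0:ℝ) < 1 + Real.exp z := by positivity
  have hx : x = z * s := by rw [hz_def]; field_simp
  unfold eta2
  rw [hlogneg, hx, ← hsqτ, Real.exp_neg]
  have hE : Real.exp z ≠ 0 := Real.exp_ne_zero z
  field_simp
  ring
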